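/- Let λ > 0, let Φ be a symmetric positive semidefinite d×d real matrix, let Q ∈ ℝ^{d×C}, let F_t ∈ ℝ^{n×d} and Y_t ∈ ℝ^{n×C}. Set R_{t−1} = (Φ + λI)⁻¹, W_{t−1} = R_{t−1}Q, and R_t = (Φ + F_tᵀF_t + λI)⁻¹. Then the recursive-least-squares weight update W_t = W_{t−1} + R_t F_tᵀ(Y_t − F_t W_{t−1}) satisfies W_t = R_t (Q + F_tᵀ Y_t); i.e., the recursively updated classifier equals the exact batch ridge-regression solution computed from the accumulated cross-correlation Q + F_tᵀY_t. -/
import Mathlib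


open Matrix

/-- One step of the recursive-least-squares weight update equals the exact batch
ridge-regression solution: with `R_{t−1} = (Φ + λI)⁻¹`, `W_{t−1} = R_{t−1} Q` and
`R_t = (Φ + FᵀF + λI)⁻¹`, the update
`W_t = W_{t−1} + R_t Fᵀ (Y − F W_{t−1})` satisfies `W_t = R_t (Q + Fᵀ Y)`. -/
theorem rls_weight_update_eq_batch {d C n : ℕ}
    (lam : ℝ) (hlam : 0 < lam)
    (Φ : Matrix (Fin d) (Fin d) ℝ) (hΦ : Φ.PosSemidef)
    (Q : Matrix (Fin d) (Fin C) ℝ)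
    (Ft : Matrix (Fin n) (Fin d) ℝ) (Yt : Matrix (Fin n) (Fin C) ℝ) :
    (Φ + lam • 1)⁻¹ * Q +
        (Φ + Ftᵀ * Ft + lam • 1)⁻¹ * Ftᵀ * (Yt - Ft * ((Φ + lam • 1)⁻¹ * Q)) =
      (Φ + Ftᵀ * Ft + lam • 1)⁻¹ * (Q + Ftᵀ * Yt) := by
  have hsmul : (lam • (1 : Matrix (Fin d) (Fin d) ℝ)).PosDef := by
    rw [smul_one_eq_diagonal]
    exact posDef_diagonal_iff.mpr fun _ => hlam
  have hFt : (Ftᵀ * Ft).PosSemidef := by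
    simpa using posSemidef_conjTranspose_mul_self Ft
  have hA : (Φ + lam • (1 : Matrix (Fin d) (Fin d) ℝ)).PosDef :=
    Matrix.PosDef.posSemidef_add hΦ hsmul
  have hB : (Φ + Ftᵀ * Ft + lam • (1 : Matrix (Fin d) (Fin d) ℝ)).PosDef :=
    Matrix.PosDef.posSemidef_add (hΦ.add hFt) hsmul
  set A := Φ + lam • (1 : Matrix (Fin d) (Fin d) ℝ) with hAdef
  set B := Φ + Ftᵀ * Ft + lam • (1 : Matrix (Fin d) (Fin d) ℝ) with hBdef
  have hAdet : IsUnit A.det := (isUnit_iff_isUnit_det A).mp hA.isUnit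
  have hBdet : IsUnit B.det := (isUnit_iff_isUnit_det B).mp hB.isUnit
  have h1 : B * B⁻¹ = 1 := mul_nonsing_inv B hBdet
  have h2 : A * A⁻¹ = 1 := mul_nonsing_inv A hAdet
  have hBA : B = A + Ftᵀ * Ft := by
    rw [hAdef, hBdef, add_right_comm]
  have e : B * (A⁻¹ * Q + B⁻¹ * Ftᵀ * (Yt - Ft * (A⁻¹ * Q))) = Q + Ftᵀ * Yt := by
    simp only [Matrix.mul_add, Matrix.mul_sub, ← Matrix.mul_assoc, h1, Matrix.one_mul]
    rw [hBA]
    simp only [Matrix.add_mul, h2, Matrix.one_mul]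
    abel
  have cancel : ∀ X : Matrix (Fin d) (Fin C) ℝ, B⁻¹ * (B * X) = X := fun X => by
    rw [← Matrix.mul_assoc, nonsing_inv_mul B hBdet, Matrix.one_mul]
  calc A⁻¹ * Q + B⁻¹ * Ftᵀ * (Yt - Ft * (A⁻¹ * Q))
      = B⁻¹ * (B * (A⁻¹ * Q + B⁻¹ * Ftᵀ * (Yt - Ft * (A⁻¹ * Q)))) := (cancel _).symm
    _ = B⁻¹ * (Q + Ftᵀ * Yt) := by rw [e]
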